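/- The rank of the 2×2 matrix multiplication tensor μ_{2,2,2} is at most 7; explicitly, μ_{2,2,2} admits a decomposition as a sum of 7 simple tensors (Strassen's algorithm). -/

import Mathlib

open TensorProduct

set_option maxHeartbeats 2000000

/-- The linear functional on `2 × 2` matrices picking out the `(i, j)` entry. -/
def matEntry (k : Type*) [Field k] (i j : Fin 2) :
    Module.Dual k (Matrix (Fin 2) (Fin 2) k) where
  toFun X := X i j
  map_add' := by intros; rfl
  map_smul' := by intros; rfl

/-- The `2 × 2` matrix multiplication tensor
`μ_{2,2,2} ∈ (k^{2×2})* ⊗ (k^{2×2})* ⊗ k^{2×2}`. -/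
noncomputable def mu222 (k : Type*) [Field k] :
    Module.Dual k (Matrix (Fin 2) (Fin 2) k) ⊗[k]
      (Module.Dual k (Matrix (Fin 2) (Fin 2) k) ⊗[k] Matrix (Fin 2) (Fin 2) k) :=
  ∑ i : Fin 2, ∑ j : Fin 2, ∑ l : Fin 2,
    matEntry k i j ⊗ₜ[k] (matEntry k j l ⊗ₜ[k] Matrix.single i l (1 : k))

/-- Strassen: `μ_{2,2,2}` is a sum of 7 simple tensors, so its rank is at most 7. -/
theorem mu222_rank_le_seven (k : Type*) [Field k] :
    ∃ (a b : Fin 7 → Module.Dual k (Matrix (Fin 2) (Fin 2) k))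
      (c : Fin 7 → Matrix (Fin 2) (Fin 2) k),
      mu222 k = ∑ i, a i ⊗ₜ[k] (b i ⊗ₜ[k] c i) := by
  let e := matEntry k
  let E : Fin 2 → Fin 2 → Matrix (Fin 2) (Fin 2) k :=
    fun i l => Matrix.single i l (1 : k)
  refine ⟨![e 0 0 + e 1 1, e 1 0 + e 1 1, e 0 0, e 1 1, e 0 0 + e 0 1,
            e 1 0 + (-1 : k) • e 0 0, e 0 1 + (-1 : k) • e 1 1],
          ![e 0 0 + e 1 1, e 0 0, e 0 1 + (-1 : k) • e 1 1, e 1 0 + (-1 : k) • e 0 0, e 1 1,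
            e 0 0 + e 0 1, e 1 0 + e 1 1],
          ![E 0 0 + E 1 1, E 1 0 + (-1 : k) • E 1 1, E 0 1 + E 1 1, E 0 0 + E 1 0,
            (-1 : k) • E 0 0 + E 0 1, E 1 1, E 0 0], ?_⟩
  rw [mu222]
  simp only [Fin.sum_univ_two, Fin.sum_univ_succ, Finset.univ_eq_empty, Finset.sum_empty,
    add_zero, Matrix.cons_val_zero, Matrix.cons_val_succ, Fin.succ_zero_eq_one]
  simp only [e, E, tmul_add, add_tmul, tmul_smul, ← smul_tmul', smul_add]
  module
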